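/- Let A ∈ GL(2,ℤ) be hyperbolic (no eigenvalue of modulus 1), with stable eigenline E^s and unstable eigenline E^u in ℝ². Let G: T² → T² be a homeomorphism whose induced action on the fundamental group is A, i.e. G admits a continuous lift G̃: ℝ² → ℝ² with π∘G̃ = G∘π and G̃(x̃ + n) = G̃(x̃) + A·n for all x̃ ∈ ℝ² and n ∈ ℤ². Suppose G maps linear stable leaves to linear stable leaves and linear unstable leaves to linear unstable leaves: G(x + π(E^s)) = G(x) + π(E^s) and G(x + π(E^u)) = G(x) + π(E^u) for every x ∈ T². Then G is affine: there exists v ∈ T² such that G(x) = A·x + v for all x ∈ T², where A also denotes the automorphism of T² induced by the matrix A. -/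

import Mathlib

noncomputable section

/-- The projection `π : ℝ² → T² = ℝ²/ℤ²`, realized coordinatewise. -/
def torusProj2 (x : Fin 2 → ℝ) : Fin 2 → UnitAddCircle :=
  fun i => (x i : UnitAddCircle)

lemma aux_noIntEigen (M : Matrix (Fin 2) (Fin 2) ℤ) (l : ℝ) (hl : |l| < 1) (hl0 : l ≠ 0)
    (w : Fin 2 → ℤ)
    (hw : (M.map (Int.cast : ℤ → ℝ)).mulVec (fun i => (w i : ℝ)) = l • fun i => (w i : ℝ)) :
    w = 0 := by
  by_contra hne
  obtain ⟨i, hi⟩ : ∃ i, w i ≠ 0 := by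
    by_contra h
    push_neg at h
    exact hne (funext h)
  have hmap : ∀ k : ℕ, ((M ^ k).map (Int.cast : ℤ → ℝ)) = (M.map (Int.cast : ℤ → ℝ)) ^ k := by
    intro k
    have := map_pow ((Int.castRingHom ℝ).mapMatrix) M k
    simpa [RingHom.mapMatrix_apply] using this
  have key : ∀ k : ℕ, ((M ^ k).map (Int.cast : ℤ → ℝ)).mulVec (fun i => (w i : ℝ))
      = l ^ k • fun i => (w i : ℝ) := by
    intro k
    induction k with
    | zero => simp [Matrix.map_one]
    | succ k ih =>
      rw [hmap] at ih ⊢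
      rw [pow_succ, ← Matrix.mulVec_mulVec, hw, Matrix.mulVec_smul, ih, pow_succ]
      rw [smul_smul]; ring_nf


  obtain ⟨k, hk⟩ : ∃ k : ℕ, |l| ^ k < 1 / |(w i : ℝ)| := by
    apply exists_pow_lt_of_lt_one _ hl
    positivity
  have hwi : (0:ℝ) < |(w i : ℝ)| := by
    simp only [abs_pos, ne_eq, Int.cast_eq_zero]
    exact hi
  set n : ℤ := ((M ^ k).mulVec w) i with hn
  have hcast : (n : ℝ) = l ^ k * (w i : ℝ) := by
    have h1 := RingHom.map_mulVec (Int.castRingHom ℝ) (M ^ k) w i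
    have h2 := congrFun (key k) i
    simp only [Pi.smul_apply, smul_eq_mul] at h2
    rw [hn]
    rw [show ((Int.castRingHom ℝ) ∘ w) = (fun i => (w i : ℝ)) from rfl] at h1
    simp only [Int.coe_castRingHom] at h1
    rw [h1, h2]
  have hn0 : n ≠ 0 := by
    intro h0
    rw [h0] at hcast
    have : l ^ k * (w i : ℝ) ≠ 0 := by
      apply mul_ne_zero (pow_ne_zero _ hl0)
      simpa using hi
    exact this (by simpa using hcast.symm)
  have h1le : (1:ℝ) ≤ |(n:ℝ)| := by
    rw [← Int.cast_abs]
    exact_mod_cast Int.one_le_abs hn0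
  have : |(n:ℝ)| < 1 := by
    rw [hcast, abs_mul, abs_pow]
    calc |l| ^ k * |(w i : ℝ)| < (1 / |(w i : ℝ)|) * |(w i : ℝ)| := by
          apply mul_lt_mul_of_pos_right hk hwi
      _ = 1 := by field_simp
  linarith

lemma aux_const_of_countable (f : ℝ → ℝ) (hf : Continuous f) (C : Set ℝ) (hC : C.Countable)
    (hmem : ∀ t, f t ∈ C) (t : ℝ) : f t = f 0 := by
  by_contra hne
  have hpre : IsPreconnected (Set.range f) := by
    have := isPreconnected_univ.image f hf.continuousOn
    rwa [Set.image_univ] at this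
  rcases lt_or_gt_of_ne hne with h | h
  case _ =>
    have hIcc : Set.Icc (f t) (f 0) ⊆ Set.range f :=
      hpre.Icc_subset ⟨t, rfl⟩ ⟨0, rfl⟩
    have hsub : Set.Icc (f t) (f 0) ⊆ C := fun x hx => by
      obtain ⟨s, hs⟩ := hIcc hx; rw [← hs]; exact hmem s
    have h0 : (MeasureTheory.volume (Set.Icc (f t) (f 0))) = 0 :=
      le_antisymm (le_trans (MeasureTheory.measure_mono hsub) (hC.measure_zero _).le) zero_le
    rw [Real.volume_Icc] at h0
    simp only [ENNReal.ofReal_eq_zero] at h0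
    linarith
  case _ =>
    have hIcc : Set.Icc (f 0) (f t) ⊆ Set.range f :=
      hpre.Icc_subset ⟨0, rfl⟩ ⟨t, rfl⟩
    have hsub : Set.Icc (f 0) (f t) ⊆ C := fun x hx => by
      obtain ⟨s, hs⟩ := hIcc hx; rw [← hs]; exact hmem s
    have h0 : (MeasureTheory.volume (Set.Icc (f 0) (f t))) = 0 :=
      le_antisymm (le_trans (MeasureTheory.measure_mono hsub) (hC.measure_zero _).le) zero_le
    rw [Real.volume_Icc] at h0
    simp only [ENNReal.ofReal_eq_zero] at h0
    linarith


lemma aux_main (Gt : (Fin 2 → ℝ) → (Fin 2 → ℝ)) (hGt_cont : Continuous Gt)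
    (M : Matrix (Fin 2) (Fin 2) ℝ)
    (hper : ∀ (x : Fin 2 → ℝ) (n : Fin 2 → ℤ),
      Gt (x + fun i => (n i : ℝ)) = Gt x + M.mulVec (fun i => (n i : ℝ)))
    (E : Submodule ℝ (Fin 2 → ℝ))
    (c : (Fin 2 → ℝ) →ₗ[ℝ] ℝ)
    (u : Fin 2 → ℝ) (hcu : c u = 1)
    (hker : ∀ x, c x = 0 ↔ x ∈ E)
    (hnoint : ∀ w : Fin 2 → ℤ, (fun i => ((w i : ℤ) : ℝ)) ∈ E → w = 0)
    (hME : ∀ v ∈ E, M.mulVec v ∈ E)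
    (hleaf : ∀ (x v : Fin 2 → ℝ), v ∈ E → ∃ w ∈ E, ∃ n : Fin 2 → ℤ,
      Gt (x + v) = Gt x + w + fun i => (n i : ℝ)) :
    ∀ x, c (Gt x - M.mulVec x) = c (Gt 0) := by
  have hc_cont : Continuous c := c.continuous_of_finiteDimensional
  -- the countable target set
  set C : Set ℝ := Set.range (fun n : Fin 2 → ℤ => c (fun i => (n i : ℝ))) with hCdef
  have hC : C.Countable := Set.countable_range _
  -- Step A: the lift moves points along `E`-directions when displaced along `E`
  have stepA : ∀ (x v : Fin 2 → ℝ), v ∈ E → c (Gt (x + v) - Gt x) = 0 := by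
    intro x v hv
    set F : ℝ → ℝ := fun t => c (Gt (x + t • v) - Gt x) with hF
    have hFc : Continuous F := by
      apply hc_cont.comp
      exact (hGt_cont.comp (by continuity)).sub continuous_const
    have hmem : ∀ t, F t ∈ C := by
      intro t
      obtain ⟨w, hw, n, hn⟩ := hleaf x (t • v) (E.smul_mem t hv)
      have : F t = c (fun i => (n i : ℝ)) := by
        rw [hF]
        simp only
        rw [hn]
        have : Gt x + w + (fun i => (n i : ℝ)) - Gt x = w + fun i => (n i : ℝ) := by abel
        rw [this, map_add, (hker w).2 hw, zero_add]
      rw [this]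
      exact ⟨n, rfl⟩
    have hF0 : F 0 = 0 := by
      rw [hF]; simp
    have := aux_const_of_countable F hFc C hC hmem 1
    rw [hF0] at this
    simpa [hF] using this
  -- the displacement function
  set φ : (Fin 2 → ℝ) → (Fin 2 → ℝ) := fun x => Gt x - M.mulVec x with hφ
  have hφ_cont : Continuous φ := by
    apply hGt_cont.sub
    exact (M.mulVecLin).continuous_of_finiteDimensional
  have h_per : ∀ (x : Fin 2 → ℝ) (n : Fin 2 → ℤ), φ (x + fun i => (n i : ℝ)) = φ x := by
    intro x n
    rw [hφ]
    simp only
    rw [hper, Matrix.mulVec_add]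
    abel
  have h_dir : ∀ (x v : Fin 2 → ℝ), v ∈ E → c (φ (x + v)) = c (φ x) := by
    intro x v hv
    have h1 : φ (x + v) - φ x = (Gt (x + v) - Gt x) - M.mulVec v := by
      rw [hφ]; simp only
      rw [Matrix.mulVec_add]; abel
    have h2 : c (φ (x + v)) - c (φ x) = 0 := by
      rw [← map_sub, h1, map_sub, stepA x v hv, (hker _).2 (hME v hv)]
      ring
    linarith
  -- the one-dimensional reduction
  set f : ℝ → ℝ := fun t => c (φ (t • u)) with hf
  have hf_cont : Continuous f := hc_cont.comp (hφ_cont.comp (by continuity))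
  have h_fx : ∀ x, c (φ x) = f (c x) := by
    intro x
    have hmem : x - c x • u ∈ E := by
      rw [← hker, map_sub, map_smul, hcu, smul_eq_mul, mul_one, sub_self]
    have hx : x = c x • u + (x - c x • u) := by abel
    rw [hf]
    simp only
    conv_lhs => rw [hx]
    exact h_dir (c x • u) (x - c x • u) hmem
  have h_f_per : ∀ (t : ℝ) (n : Fin 2 → ℤ), f (t + c (fun i => (n i : ℝ))) = f t := by
    intro t n
    set nr : Fin 2 → ℝ := fun i => (n i : ℝ) with hnr
    have hv : c nr • u - nr ∈ E := by
      rw [← hker, map_sub, map_smul, hcu, smul_eq_mul, mul_one, sub_self]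
    have h1 : (t + c nr) • u = (t • u + nr) + (c nr • u - nr) := by
      rw [add_smul]; abel
    have : f (t + c nr) = c (φ ((t • u + nr) + (c nr • u - nr))) := by
      rw [hf]; simp only [← h1]
    rw [this, h_dir _ _ hv, h_per]
  -- the subgroup of translations
  set D : AddSubgroup ℝ :=
    { carrier := C
      zero_mem' := by
        refine ⟨0, ?_⟩
        show c (fun i => (((0 : Fin 2 → ℤ) i : ℤ) : ℝ)) = 0
        have : (fun i => (((0 : Fin 2 → ℤ) i : ℤ) : ℝ)) = (0 : Fin 2 → ℝ) := by
          funext i; simp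
        rw [this, map_zero]
      add_mem' := by
        rintro a b ⟨m, rfl⟩ ⟨n, rfl⟩
        refine ⟨m + n, ?_⟩
        show c (fun i => (((m + n) i : ℤ) : ℝ)) = c (fun i => ((m i : ℤ) : ℝ)) + c (fun i => ((n i : ℤ) : ℝ))
        have : (fun i => (((m + n) i : ℤ) : ℝ)) =
            (fun i => ((m i : ℤ) : ℝ)) + fun i => ((n i : ℤ) : ℝ) := by
          funext i; push_cast; simp
        rw [this, map_add]
      neg_mem' := by
        rintro a ⟨m, rfl⟩
        refine ⟨-m, ?_⟩
        show c (fun i => (((-m) i : ℤ) : ℝ)) = -c (fun i => ((m i : ℤ) : ℝ))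
        have : (fun i => (((-m) i : ℤ) : ℝ)) = -fun i => ((m i : ℤ) : ℝ) := by
          funext i; push_cast; simp
        rw [this, map_neg] } with hD
  have hDC : (D : Set ℝ) = C := rfl
  -- D is dense
  have hdense : Dense (D : Set ℝ) := by
    rcases AddSubgroup.dense_or_cyclic D with h | ⟨a, ha⟩
    · exact h
    · exfalso
      have hmem : ∀ j : Fin 2, ∃ k : ℤ, k • a = c (fun i => ((Pi.single j 1 : Fin 2 → ℤ) i : ℝ)) := by
        intro j
        have : c (fun i => ((Pi.single j 1 : Fin 2 → ℤ) i : ℝ)) ∈ D := ⟨Pi.single j 1, rfl⟩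
        rw [ha, ← AddSubgroup.zmultiples_eq_closure] at this
        exact AddSubgroup.mem_zmultiples_iff.mp this
      obtain ⟨k0, hk0⟩ := hmem 0
      obtain ⟨k1, hk1⟩ := hmem 1
      set w : Fin 2 → ℤ := k1 • Pi.single 0 1 - k0 • Pi.single 1 1 with hwdef
      have hwr : (fun i => ((w i : ℤ) : ℝ)) =
          (k1 : ℝ) • (fun i => ((Pi.single 0 1 : Fin 2 → ℤ) i : ℝ))
          - (k0 : ℝ) • (fun i => ((Pi.single 1 1 : Fin 2 → ℤ) i : ℝ)) := by
        funext i
        simp only [hwdef, Pi.sub_apply, Pi.smul_apply, smul_eq_mul, Pi.smul_apply]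
        push_cast
        ring
      have hcw : c (fun i => ((w i : ℤ) : ℝ)) = 0 := by
        rw [hwr, map_sub, map_smul, map_smul, ← hk0, ← hk1]
        simp only [smul_eq_mul, zsmul_eq_mul]
        ring
      have hwE : (fun i => ((w i : ℤ) : ℝ)) ∈ E := (hker _).1 hcw
      have hw0 : w = 0 := hnoint w hwE
      have hk10 : k1 = 0 := by
        have := congrFun hw0 0
        simpa [hwdef, Pi.single_apply] using this
      have hk00 : k0 = 0 := by
        have := congrFun hw0 1
        simpa [hwdef, Pi.single_apply] using this
      have hcz0 : c (fun i => ((Pi.single 0 1 : Fin 2 → ℤ) i : ℝ)) = 0 := by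
        rw [← hk0, hk00]; simp
      have hcz1 : c (fun i => ((Pi.single 1 1 : Fin 2 → ℤ) i : ℝ)) = 0 := by
        rw [← hk1, hk10]; simp
      have hu : u = u 0 • (fun i => ((Pi.single 0 1 : Fin 2 → ℤ) i : ℝ))
          + u 1 • (fun i => ((Pi.single 1 1 : Fin 2 → ℤ) i : ℝ)) := by
        funext i
        fin_cases i <;> simp [Pi.single_apply]
      have : c u = 0 := by
        rw [hu, map_add, map_smul, map_smul, hcz0, hcz1]
        simp
      rw [hcu] at this
      exact one_ne_zero this
  -- f is constant
  have hfconst : ∀ t, f t = f 0 := by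
    have heq : Set.EqOn f (fun _ => f 0) (D : Set ℝ) := by
      rintro d ⟨n, rfl⟩
      have := h_f_per 0 n
      rw [zero_add] at this
      simpa using this
    have := Continuous.ext_on hdense hf_cont continuous_const heq
    intro t
    exact congrFun this t
  -- conclusion
  intro x
  have h1 : c (Gt x - M.mulVec x) = c (φ x) := rfl
  have h2 : c (φ x) = f (c x) := h_fx x
  have h3 : c (φ 0) = f (c 0) := h_fx 0
  have h4 : φ 0 = Gt 0 := by
    rw [hφ]; simp
  rw [h1, h2, hfconst (c x), ← hfconst (c 0), ← h3, h4]


/-- Let `A ∈ GL(2,ℤ)` be hyperbolic with stable eigenline `Eˢ` and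
unstable eigenline `Eᵘ`. A homeomorphism `G` of `T²` acting as `A` on the fundamental
group (i.e. admitting a lift `G̃` with `G̃(x̃+n) = G̃(x̃) + A·n`) that sends linear
stable leaves to linear stable leaves and linear unstable leaves to linear unstable
leaves is affine: `G(x) = A·x + v` for some `v ∈ T²`. -/
theorem homeo_preserving_eigenfoliations_is_affine
    (A : Matrix (Fin 2) (Fin 2) ℤ) (hdet : A.det = 1 ∨ A.det = -1)
    (hhyp : ∀ z : ℂ, ((A.map (Int.cast : ℤ → ℂ)).charpoly).IsRoot z → ‖z‖ ≠ 1)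
    (Es Eu : Submodule ℝ (Fin 2 → ℝ))
    (hEs : Module.finrank ℝ Es = 1 ∧ ∃ ls : ℝ, |ls| < 1 ∧
      ∀ v ∈ Es, (A.map (Int.cast : ℤ → ℝ)).mulVec v = ls • v)
    (hEu : Module.finrank ℝ Eu = 1 ∧ ∃ lu : ℝ, 1 < |lu| ∧
      ∀ v ∈ Eu, (A.map (Int.cast : ℤ → ℝ)).mulVec v = lu • v)
    (G : (Fin 2 → UnitAddCircle) ≃ₜ (Fin 2 → UnitAddCircle))
    -- `G` admits a continuous lift `Gt` with `Gt (x̃ + n) = Gt x̃ + A·n`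
    (Gt : (Fin 2 → ℝ) → (Fin 2 → ℝ)) (hGt_cont : Continuous Gt)
    (hGt_proj : ∀ x : Fin 2 → ℝ, G (torusProj2 x) = torusProj2 (Gt x))
    (hGt_per : ∀ (x : Fin 2 → ℝ) (n : Fin 2 → ℤ),
      Gt (x + fun i => (n i : ℝ)) = Gt x + fun i => ((A.mulVec n) i : ℝ))
    -- `G` maps linear stable/unstable leaves to linear stable/unstable leaves
    (hleafS : ∀ x : Fin 2 → UnitAddCircle,
      (⇑G) '' ((fun v => x + torusProj2 v) '' (Es : Set (Fin 2 → ℝ))) =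
        (fun v => G x + torusProj2 v) '' (Es : Set (Fin 2 → ℝ)))
    (hleafU : ∀ x : Fin 2 → UnitAddCircle,
      (⇑G) '' ((fun v => x + torusProj2 v) '' (Eu : Set (Fin 2 → ℝ))) =
        (fun v => G x + torusProj2 v) '' (Eu : Set (Fin 2 → ℝ))) :
    ∃ v : Fin 2 → UnitAddCircle, ∀ xt : Fin 2 → ℝ,
      G (torusProj2 xt) = torusProj2 ((A.map (Int.cast : ℤ → ℝ)).mulVec xt) + v := by
  obtain ⟨hdimS, ls, hls, hlsE⟩ := hEs
  obtain ⟨hdimU, lu, hlu, hluE⟩ := hEu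
  set Ar : Matrix (Fin 2) (Fin 2) ℝ := A.map (Int.cast : ℤ → ℝ) with hArdef
  -- spanning vectors
  have hvs_ex : ∃ vs : Fin 2 → ℝ, vs ∈ Es ∧ vs ≠ 0 ∧ Submodule.span ℝ {vs} = Es := by
    have hbot : Es ≠ ⊥ := by
      intro h; rw [h, finrank_bot] at hdimS; exact absurd hdimS zero_ne_one
    obtain ⟨vs, hvsmem, hvs0⟩ := Submodule.exists_mem_ne_zero_of_ne_bot hbot
    refine ⟨vs, hvsmem, hvs0, ?_⟩
    have hle : Submodule.span ℝ {vs} ≤ Es := by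
      rw [Submodule.span_le, Set.singleton_subset_iff]; exact hvsmem
    exact Submodule.eq_of_le_of_finrank_le hle
      (by rw [hdimS, finrank_span_singleton hvs0])
  have hvu_ex : ∃ vu : Fin 2 → ℝ, vu ∈ Eu ∧ vu ≠ 0 ∧ Submodule.span ℝ {vu} = Eu := by
    have hbot : Eu ≠ ⊥ := by
      intro h; rw [h, finrank_bot] at hdimU; exact absurd hdimU zero_ne_one
    obtain ⟨vu, hvumem, hvu0⟩ := Submodule.exists_mem_ne_zero_of_ne_bot hbot
    refine ⟨vu, hvumem, hvu0, ?_⟩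
    have hle : Submodule.span ℝ {vu} ≤ Eu := by
      rw [Submodule.span_le, Set.singleton_subset_iff]; exact hvumem
    exact Submodule.eq_of_le_of_finrank_le hle
      (by rw [hdimU, finrank_span_singleton hvu0])
  obtain ⟨vs, hvsmem, hvs0, hspanS⟩ := hvs_ex
  obtain ⟨vu, hvumem, hvu0, hspanU⟩ := hvu_ex
  have hAvs : Ar.mulVec vs = ls • vs := hlsE vs hvsmem
  have hAvu : Ar.mulVec vu = lu • vu := hluE vu hvumem
  -- the integer inverse matrix
  have hdd : A.det * A.det = 1 := by rcases hdet with h | h <;> rw [h] <;> ring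
  set B : Matrix (Fin 2) (Fin 2) ℤ := A.det • A.adjugate with hBdef
  have hBA : B * A = 1 := by
    rw [hBdef, Matrix.smul_mul, Matrix.adjugate_mul, smul_smul, hdd, one_smul]
  have hBAr : (B.map (Int.cast : ℤ → ℝ)) * Ar = 1 := by
    have h := congrArg ((Int.castRingHom ℝ).mapMatrix) hBA
    rw [map_mul, map_one] at h
    simpa [RingHom.mapMatrix_apply, hArdef] using h
  have hls0 : ls ≠ 0 := by
    intro h
    rw [h, zero_smul] at hAvs
    have h1 : ((B.map (Int.cast : ℤ → ℝ)) * Ar).mulVec vs = 0 := by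
      rw [← Matrix.mulVec_mulVec, hAvs, Matrix.mulVec_zero]
    rw [hBAr, Matrix.one_mulVec] at h1
    exact hvs0 h1
  have hlu0 : lu ≠ 0 := by
    intro h; rw [h, abs_zero] at hlu; linarith
  have hBuE : ∀ v ∈ Eu, (B.map (Int.cast : ℤ → ℝ)).mulVec v = lu⁻¹ • v := by
    intro v hv
    have h1 : (B.map (Int.cast : ℤ → ℝ)).mulVec (Ar.mulVec v) = v := by
      rw [Matrix.mulVec_mulVec, hBAr, Matrix.one_mulVec]
    rw [hluE v hv, Matrix.mulVec_smul] at h1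
    calc (B.map (Int.cast : ℤ → ℝ)).mulVec v
        = lu⁻¹ • (lu • (B.map (Int.cast : ℤ → ℝ)).mulVec v) := by
          rw [smul_smul, inv_mul_cancel₀ hlu0, one_smul]
      _ = lu⁻¹ • v := by rw [h1]
  -- linear independence and basis
  have hsne : ls ≠ lu := by
    intro h; rw [h] at hls; linarith
  have hli : LinearIndependent ℝ ![vs, vu] := by
    rw [LinearIndependent.pair_iff]
    intro s t hst
    have h1 : Ar.mulVec (s • vs + t • vu) = 0 := by rw [hst, Matrix.mulVec_zero]
    rw [Matrix.mulVec_add, Matrix.mulVec_smul, Matrix.mulVec_smul, hAvs, hAvu] at h1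
    have e1 : (s * ls) • vs + (t * lu) • vu = 0 := by
      rw [← smul_smul, ← smul_smul]; exact h1
    have h2 : lu • (s • vs + t • vu) = 0 := by rw [hst, smul_zero]
    rw [smul_add, smul_smul, smul_smul] at h2
    have e3 : ((s * ls) • vs + (t * lu) • vu) - ((lu * s) • vs + (lu * t) • vu) = 0 := by
      rw [e1, h2, sub_zero]
    have e4 : (s * ls - lu * s) • vs = 0 := by
      rw [sub_smul]
      have hcomm : (t * lu) • vu = (lu * t) • vu := by rw [mul_comm]
      calc (s * ls) • vs - (lu * s) • vs
          = ((s * ls) • vs + (t * lu) • vu) - ((lu * s) • vs + (t * lu) • vu) := by abel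
        _ = ((s * ls) • vs + (t * lu) • vu) - ((lu * s) • vs + (lu * t) • vu) := by rw [hcomm]
        _ = 0 := e3
    have hs0 : s = 0 := by
      rcases smul_eq_zero.mp e4 with h | h
      · have h' : s * (ls - lu) = 0 := by linear_combination h
        rcases mul_eq_zero.mp h' with h'' | h''
        · exact h''
        · exact absurd (sub_eq_zero.mp h'') hsne
      · exact absurd h hvs0
    refine ⟨hs0, ?_⟩
    rw [hs0, zero_smul, zero_add] at hst
    rcases smul_eq_zero.mp hst with h | h
    · exact h
    · exact absurd h hvu0
  have hcard : Fintype.card (Fin 2) = Module.finrank ℝ (Fin 2 → ℝ) := by simp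
  set b : Module.Basis (Fin 2) ℝ (Fin 2 → ℝ) :=
    basisOfLinearIndependentOfCardEqFinrank hli hcard with hbdef
  have hbcoe : ⇑b = ![vs, vu] := coe_basisOfLinearIndependentOfCardEqFinrank hli hcard
  have hb0 : b 0 = vs := by rw [hbcoe]; rfl
  have hb1 : b 1 = vu := by rw [hbcoe]; rfl
  set cs : (Fin 2 → ℝ) →ₗ[ℝ] ℝ := b.coord 0 with hcsdef
  set cu : (Fin 2 → ℝ) →ₗ[ℝ] ℝ := b.coord 1 with hcudef
  have hrepr : ∀ x : Fin 2 → ℝ, x = cs x • vs + cu x • vu := by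
    intro x
    have h := b.sum_repr x
    rw [Fin.sum_univ_two, hb0, hb1] at h
    rw [hcsdef, hcudef]
    simp only [Module.Basis.coord_apply]
    exact h.symm
  have hcs_vs : cs vs = 1 := by
    rw [hcsdef, ← hb0, Module.Basis.coord_apply, Module.Basis.repr_self]
    simp
  have hcs_vu : cs vu = 0 := by
    rw [hcsdef, ← hb1, Module.Basis.coord_apply, Module.Basis.repr_self]
    simp [Finsupp.single_apply]
  have hcu_vs : cu vs = 0 := by
    rw [hcudef, ← hb0, Module.Basis.coord_apply, Module.Basis.repr_self]
    simp [Finsupp.single_apply]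
  have hcu_vu : cu vu = 1 := by
    rw [hcudef, ← hb1, Module.Basis.coord_apply, Module.Basis.repr_self]
    simp
  -- kernels
  have hkerS : ∀ x : Fin 2 → ℝ, cu x = 0 ↔ x ∈ Es := by
    intro x
    constructor
    · intro h
      have hx := hrepr x
      rw [h, zero_smul, add_zero] at hx
      rw [hx, ← hspanS]
      exact Submodule.smul_mem _ _ (Submodule.mem_span_singleton_self vs)
    · intro h
      rw [← hspanS] at h
      obtain ⟨a, ha⟩ := Submodule.mem_span_singleton.mp h
      rw [← ha, map_smul, hcu_vs, smul_eq_mul, mul_zero]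
  have hkerU : ∀ x : Fin 2 → ℝ, cs x = 0 ↔ x ∈ Eu := by
    intro x
    constructor
    · intro h
      have hx := hrepr x
      rw [h, zero_smul, zero_add] at hx
      rw [hx, ← hspanU]
      exact Submodule.smul_mem _ _ (Submodule.mem_span_singleton_self vu)
    · intro h
      rw [← hspanU] at h
      obtain ⟨a, ha⟩ := Submodule.mem_span_singleton.mp h
      rw [← ha, map_smul, hcs_vu, smul_eq_mul, mul_zero]
  -- no integer vectors on the eigenlines
  have hnointS : ∀ w : Fin 2 → ℤ, (fun i => ((w i : ℤ) : ℝ)) ∈ Es → w = 0 := by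
    intro w hw
    exact aux_noIntEigen A ls hls hls0 w (hlsE _ hw)
  have hlui : |lu⁻¹| < 1 := by
    rw [abs_inv]
    rw [inv_lt_one_iff₀]
    right; exact hlu
  have hnointU : ∀ w : Fin 2 → ℤ, (fun i => ((w i : ℤ) : ℝ)) ∈ Eu → w = 0 := by
    intro w hw
    exact aux_noIntEigen B lu⁻¹ hlui (inv_ne_zero hlu0) w (hBuE _ hw)
  -- eigenline invariance
  have hMEs : ∀ v ∈ Es, Ar.mulVec v ∈ Es := by
    intro v hv; rw [hlsE v hv]; exact Es.smul_mem _ hv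
  have hMEu : ∀ v ∈ Eu, Ar.mulVec v ∈ Eu := by
    intro v hv; rw [hluE v hv]; exact Eu.smul_mem _ hv
  -- the periodicity hypothesis in matrix form
  have hcastA : ∀ n : Fin 2 → ℤ, (fun i => ((A.mulVec n) i : ℝ)) =
      Ar.mulVec (fun i => (n i : ℝ)) := by
    intro n; funext i
    rw [hArdef]
    simp only [Matrix.mulVec, dotProduct, Fin.sum_univ_two, Matrix.map_apply]
    push_cast
    ring
  have hper' : ∀ (x : Fin 2 → ℝ) (n : Fin 2 → ℤ),
      Gt (x + fun i => (n i : ℝ)) = Gt x + Ar.mulVec (fun i => (n i : ℝ)) := by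
    intro x n
    rw [hGt_per, hcastA]
  -- torus projection facts
  have hproj_add : ∀ a c : Fin 2 → ℝ, torusProj2 (a + c) = torusProj2 a + torusProj2 c := by
    intro a c; rfl
  have hdecode : ∀ a c : Fin 2 → ℝ, torusProj2 a = torusProj2 c →
      ∃ n : Fin 2 → ℤ, c = a + fun i => (n i : ℝ) := by
    intro a c h
    have h' : ∀ i : Fin 2, ∃ k : ℤ, c i = a i + k := by
      intro i
      have hi : ((a i : ℝ) : UnitAddCircle) = ((c i : ℝ) : UnitAddCircle) := congrFun h i
      have h0 : ((c i - a i : ℝ) : UnitAddCircle) = 0 := by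
        have hsub : ((c i - a i : ℝ) : UnitAddCircle) =
            ((c i : ℝ) : UnitAddCircle) - ((a i : ℝ) : UnitAddCircle) := rfl
        rw [hsub, ← hi, sub_self]
      rw [AddCircle.coe_eq_zero_iff] at h0
      obtain ⟨k, hk⟩ := h0
      refine ⟨k, ?_⟩
      rw [zsmul_eq_mul, mul_one] at hk
      linarith [hk]
    choose n hn using h'
    exact ⟨n, funext fun i => by rw [Pi.add_apply]; exact hn i⟩
  -- leaf hypotheses in lifted form
  have hleafS' : ∀ (x v : Fin 2 → ℝ), v ∈ Es → ∃ w ∈ Es, ∃ n : Fin 2 → ℤ,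
      Gt (x + v) = Gt x + w + fun i => (n i : ℝ) := by
    intro x v hv
    have h1 : G (torusProj2 x + torusProj2 v) ∈
        (fun w => G (torusProj2 x) + torusProj2 w) '' (Es : Set (Fin 2 → ℝ)) := by
      rw [← hleafS (torusProj2 x)]
      exact ⟨torusProj2 x + torusProj2 v, ⟨v, hv, rfl⟩, rfl⟩
    obtain ⟨w, hwmem, hw⟩ := h1
    have h2 : torusProj2 (Gt x + w) = torusProj2 (Gt (x + v)) := by
      calc torusProj2 (Gt x + w) = torusProj2 (Gt x) + torusProj2 w := hproj_add _ _
        _ = G (torusProj2 x) + torusProj2 w := by rw [hGt_proj]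
        _ = G (torusProj2 x + torusProj2 v) := hw
        _ = G (torusProj2 (x + v)) := by rw [hproj_add]
        _ = torusProj2 (Gt (x + v)) := hGt_proj _
    obtain ⟨n, hn⟩ := hdecode _ _ h2
    exact ⟨w, hwmem, n, hn⟩
  have hleafU' : ∀ (x v : Fin 2 → ℝ), v ∈ Eu → ∃ w ∈ Eu, ∃ n : Fin 2 → ℤ,
      Gt (x + v) = Gt x + w + fun i => (n i : ℝ) := by
    intro x v hv
    have h1 : G (torusProj2 x + torusProj2 v) ∈
        (fun w => G (torusProj2 x) + torusProj2 w) '' (Eu : Set (Fin 2 → ℝ)) := by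
      rw [← hleafU (torusProj2 x)]
      exact ⟨torusProj2 x + torusProj2 v, ⟨v, hv, rfl⟩, rfl⟩
    obtain ⟨w, hwmem, hw⟩ := h1
    have h2 : torusProj2 (Gt x + w) = torusProj2 (Gt (x + v)) := by
      calc torusProj2 (Gt x + w) = torusProj2 (Gt x) + torusProj2 w := hproj_add _ _
        _ = G (torusProj2 x) + torusProj2 w := by rw [hGt_proj]
        _ = G (torusProj2 x + torusProj2 v) := hw
        _ = G (torusProj2 (x + v)) := by rw [hproj_add]
        _ = torusProj2 (Gt (x + v)) := hGt_proj _
    obtain ⟨n, hn⟩ := hdecode _ _ h2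
    exact ⟨w, hwmem, n, hn⟩
  -- the two coordinate functions of the displacement are constant
  have hcuφ := aux_main Gt hGt_cont Ar hper' Es cu vu hcu_vu hkerS hnointS hMEs hleafS'
  have hcsφ := aux_main Gt hGt_cont Ar hper' Eu cs vs hcs_vs hkerU hnointU hMEu hleafU'
  -- conclusion
  refine ⟨torusProj2 (Gt 0), ?_⟩
  intro xt
  have e1 : cu (Gt xt - Ar.mulVec xt - Gt 0) = 0 := by
    rw [map_sub, hcuφ xt, sub_self]
  have e2 : cs (Gt xt - Ar.mulVec xt - Gt 0) = 0 := by
    rw [map_sub, hcsφ xt, sub_self]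
  have hzero : Gt xt - Ar.mulVec xt - Gt 0 = 0 := by
    have h := hrepr (Gt xt - Ar.mulVec xt - Gt 0)
    rw [e1, e2, zero_smul, zero_smul, add_zero] at h
    exact h
  have hdiff : Gt xt = Ar.mulVec xt + Gt 0 := by
    have h1 : Gt xt - Ar.mulVec xt = Gt 0 := sub_eq_zero.mp hzero
    rw [sub_eq_iff_eq_add] at h1
    rw [h1, add_comm]
  rw [hGt_proj, hdiff, hproj_add]

end
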